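/- arXiv:1709.02906 — 2 statements merged into one kernel-verified Lean document; each statement's English description precedes it below -/
import Mathlib

section
/- Let Y be a set with a distinguished element x ∈ Y, let p be a prime, and let α be an integer with 0 < α < p. Let A be the subgroup of the free group F(Y) generated by the set (Y \ {x}) ∪ {x^{α}} (that is, by the generators other than x together with the α-th power of the generator x). Then for every g ∈ F(Y), if g^p ∈ A then g ∈ A. -/
set_option linter.unusedSectionVars false

set_option linter.unusedSectionVars false
namespace FreeGroupRoots

open FreeGroup List

variable {β : Type*} [DecidableEq β]

/-- two adjacent letters do not cancel -/
def NC (a b : β × Bool) : Prop := ¬(a.1 = b.1 ∧ a.2 = !b.2)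

def Reduced (L : List (β × Bool)) : Prop := List.Chain' NC L

theorem reduced_reduce (L : List (β × Bool)) : Reduced (reduce L) := by
  rw [Reduced, List.Chain', List.isChain_iff_getElem]
  intro i hi
  by_contra hbad
  rw [NC, not_not] at hbad
  set l := reduce L with hl
  have h2 : i + 1 < l.length := by omega
  have h1 : i < l.length := by omega
  have hc2 : l.get ⟨i+1, h2⟩ = ((l.get ⟨i, h1⟩).1, !(l.get ⟨i, h1⟩).2) := by
    obtain ⟨e1, e2⟩ := hbad
    refine Prod.ext e1.symm ?_
    simp only [List.get_eq_getElem, hl, e2, Bool.not_not]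
  have hdecomp : l = l.take i ++ (l.get ⟨i, h1⟩) :: (l.get ⟨i+1, h2⟩) :: l.drop (i + 2) := by
    conv_lhs => rw [← List.take_append_drop i l]
    congr 1
    rw [List.drop_eq_getElem_cons h1]
    congr 1
    rw [List.drop_eq_getElem_cons h2]
    rfl
  rw [hc2] at hdecomp
  exact reduce.not (L₁ := L) (by rw [← hl]; exact hdecomp)

theorem reduced_toWord (g : FreeGroup β) : Reduced g.toWord := by
  rw [← reduce_toWord]; exact reduced_reduce _

theorem reduce_eq_self {L : List (β × Bool)} (h : Reduced L) : reduce L = L := by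
  induction L with
  | nil => rfl
  | cons a tl ih =>
    have h2 : Reduced tl := h.tail
    rw [reduce.cons, ih h2]
    cases tl with
    | nil => rfl
    | cons b tl2 =>
      have hnc : NC a b := List.isChain_cons_cons.mp h |>.1
      simp only []
      rw [if_neg hnc]

theorem toWord_mk_of_reduced {L : List (β × Bool)} (h : Reduced L) :
    (FreeGroup.mk L).toWord = L := by rw [toWord_mk, reduce_eq_self h]

/-- cyclically reduced -/
def Cyc (L : List (β × Bool)) : Prop :=
  L ≠ [] ∧ Reduced L ∧ ∀ a ∈ L.getLast?, ∀ b ∈ L.head?, NC a b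

theorem head?_flatten_replicate {L : List (β × Bool)} (hL : L ≠ []) {q : ℕ} (hq : 0 < q) :
    ((List.replicate q L).flatten).head? = L.head? := by
  obtain ⟨q', rfl⟩ := Nat.exists_eq_succ_of_ne_zero hq.ne'
  obtain ⟨a, t, rfl⟩ := List.exists_cons_of_ne_nil hL
  simp [List.replicate_succ]

theorem flatten_replicate_ne_nil {L : List (β × Bool)} (hL : L ≠ []) {q : ℕ} (hq : 0 < q) :
    (List.replicate q L).flatten ≠ [] := by
  intro h
  have := head?_flatten_replicate hL hq
  rw [h] at this
  obtain ⟨a, t, rfl⟩ := List.exists_cons_of_ne_nil hL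
  simp at this

theorem getLast?_flatten_replicate {L : List (β × Bool)} (hL : L ≠ []) {q : ℕ} (hq : 0 < q) :
    ((List.replicate q L).flatten).getLast? = L.getLast? := by
  induction q with
  | zero => omega
  | succ q' ih =>
    rw [List.replicate_succ, List.flatten_cons]
    rcases Nat.eq_zero_or_pos q' with h0 | hpos
    · subst h0; simp
    · rw [List.getLast?_append_of_ne_nil _ (flatten_replicate_ne_nil hL hpos), ih hpos]

theorem reduced_flatten_replicate {L : List (β × Bool)} (hC : Cyc L) (q : ℕ) :
    Reduced ((List.replicate q L).flatten) := by
  obtain ⟨hne, hred, hjun⟩ := hC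
  induction q with
  | zero => exact List.IsChain.nil
  | succ q' ih =>
    rw [List.replicate_succ, List.flatten_cons, Reduced, List.Chain', List.isChain_append]
    refine ⟨hred, ih, ?_⟩
    intro a ha b hb
    rcases Nat.eq_zero_or_pos q' with h0 | hpos
    · subst h0; simp at hb
    · rw [head?_flatten_replicate hne hpos] at hb
      exact hjun a ha b hb

theorem frame_transfer {U P Q : List (β × Bool)}
    (h : Reduced (U ++ P ++ invRev U)) (hP : P ≠ []) (hQnil : Q ≠ [])
    (hQ : Reduced Q) (hh : Q.head? = P.head?) (hl : Q.getLast? = P.getLast?) :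
    Reduced (U ++ Q ++ invRev U) := by
  rw [Reduced, List.Chain', List.isChain_append, List.isChain_append] at h ⊢
  obtain ⟨⟨hU, hPred, hj1⟩, hinv, hj2⟩ := h
  refine ⟨⟨hU, hQ, ?_⟩, hinv, ?_⟩
  · intro a ha b hb
    rw [hh] at hb
    exact hj1 a ha b hb
  · intro a ha b hb
    rw [List.getLast?_append_of_ne_nil _ hQnil] at ha
    rw [hl] at ha
    apply hj2 a _ b hb
    rw [List.getLast?_append_of_ne_nil _ hP]
    exact ha

theorem invRev_cons (u : β × Bool) (U : List (β × Bool)) :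
    invRev (u :: U) = invRev U ++ [(u.1, !u.2)] := by
  simp [invRev]

theorem invRev_singleton (u : β × Bool) : invRev [u] = [(u.1, !u.2)] := by simp [invRev]


theorem strip_aux (n : ℕ) :
    ∀ (g : FreeGroup β), g ≠ 1 → g.toWord.length ≤ n →
    ∃ (U : List (β × Bool)) (a : FreeGroup β), Cyc a.toWord ∧
      g = FreeGroup.mk U * a * (FreeGroup.mk U)⁻¹ ∧
      g.toWord = U ++ a.toWord ++ invRev U := by
  induction n with
  | zero =>
    intro g hg hlen
    exfalso
    exact hg (toWord_eq_nil_iff.mp (List.length_eq_zero_iff.mp (Nat.le_zero.mp hlen)))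
  | succ n ih =>
    intro g hg hlen
    have hLnil : g.toWord ≠ [] := fun h => hg (toWord_eq_nil_iff.mp h)
    have hred : Reduced g.toWord := reduced_toWord g
    by_cases hcyc : ∀ a ∈ g.toWord.getLast?, ∀ b ∈ g.toWord.head?, NC a b
    · exact ⟨[], g, ⟨hLnil, hred, hcyc⟩, by simp [FreeGroup.one_eq_mk.symm], by
        simp [invRev]⟩
    · push_neg at hcyc
      obtain ⟨la, hla, hd, hhd, hnc⟩ := hcyc
      rw [NC, not_not] at hnc
      obtain ⟨u, T, hLT⟩ := List.exists_cons_of_ne_nil hLnil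
      have hu : u = hd := by rw [hLT] at hhd; simpa using hhd
      rw [hu] at hLT
      have hTnil : T ≠ [] := by
        rintro rfl
        rw [hLT] at hla
        simp at hla
        rw [← hla] at hnc
        simp at hnc
      obtain ⟨mid, w, hTd⟩ := (List.eq_nil_or_concat T).resolve_left hTnil
      have hLdecomp : g.toWord = hd :: mid ++ [w] := by
        rw [hLT, hTd]; simp [List.concat_eq_append]
      have hlaw : w = la := by
        rw [hLdecomp] at hla
        rw [show hd :: mid ++ [w] = (hd :: mid) ++ [w] from rfl, List.getLast?_concat] at hla
        simpa using hla
      rw [hlaw] at hLdecomp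
      have hred' : Reduced (hd :: mid ++ [la]) := by rw [← hLdecomp]; exact hred
      have hla_eq : la = (hd.1, !hd.2) := by
        obtain ⟨e1, e2⟩ := hnc
        exact Prod.ext e1 (by simp [e2])
      have hmidnil : mid ≠ [] := by
        rintro rfl
        simp only [List.cons_append, List.nil_append] at hred'
        have := List.isChain_cons_cons.mp hred' |>.1
        rw [NC, hla_eq] at this
        simp at this
      have hmidred : Reduced mid := by
        apply hred.infix
        exact ⟨[hd], [la], by rw [hLdecomp]; simp⟩
      have hmidW : (FreeGroup.mk mid).toWord = mid := toWord_mk_of_reduced hmidred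
      have hmid1 : FreeGroup.mk mid ≠ 1 := by
        intro h
        rw [← hmidW, h] at hmidnil
        exact hmidnil toWord_one
      have hlenmid : (FreeGroup.mk mid).toWord.length ≤ n := by
        rw [hmidW]
        have : g.toWord.length = mid.length + 2 := by rw [hLdecomp]; simp
        omega
      obtain ⟨U₁, a, hCa, hdec, hW⟩ := ih (FreeGroup.mk mid) hmid1 hlenmid
      refine ⟨hd :: U₁, a, hCa, ?_, ?_⟩
      · have hg' : g = FreeGroup.mk [hd] * FreeGroup.mk mid * (FreeGroup.mk [hd])⁻¹ := by
          rw [inv_mk, invRev_singleton, ← hla_eq, mul_mk, mul_mk]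
          conv_lhs => rw [← mk_toWord (x := g), hLdecomp]
          rfl
        rw [hg', hdec]
        have hmkcons : FreeGroup.mk (hd :: U₁) = FreeGroup.mk [hd] * FreeGroup.mk U₁ := by
          rw [mul_mk]; rfl
        rw [hmkcons, mul_inv_rev]
        group
      · have hmideq : mid = U₁ ++ a.toWord ++ invRev U₁ := by rw [← hmidW, hW]
        rw [hLdecomp, hmideq, invRev_cons, ← hla_eq]
        simp [List.append_assoc]

theorem strip (g : FreeGroup β) (hg : g ≠ 1) :
    ∃ (U : List (β × Bool)) (a : FreeGroup β), Cyc a.toWord ∧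
      g = FreeGroup.mk U * a * (FreeGroup.mk U)⁻¹ ∧
      g.toWord = U ++ a.toWord ++ invRev U :=
  strip_aux g.toWord.length g hg le_rfl

theorem pow_description (g : FreeGroup β) (hg : g ≠ 1) (q : ℕ) (hq : 0 < q) :
    ∃ (U : List (β × Bool)) (aW : List (β × Bool)), Cyc aW ∧ aW ≠ [] ∧
      g.toWord = U ++ aW ++ invRev U ∧
      (g ^ q).toWord = U ++ (List.replicate q aW).flatten ++ invRev U := by
  obtain ⟨U, a, hCa, hdec, hW⟩ := strip g hg
  set aW := a.toWord with haW
  have hanil : aW ≠ [] := hCa.1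
  refine ⟨U, aW, hCa, hanil, hW, ?_⟩
  have hflatred : Reduced ((List.replicate q aW).flatten) := reduced_flatten_replicate hCa q
  have hflatnil : (List.replicate q aW).flatten ≠ [] := flatten_replicate_ne_nil hanil hq
  have hframe0 : Reduced (U ++ aW ++ invRev U) := by rw [← hW]; exact reduced_toWord g
  have hframe : Reduced (U ++ (List.replicate q aW).flatten ++ invRev U) :=
    frame_transfer hframe0 hanil hflatnil hflatred
      (head?_flatten_replicate hanil hq) (getLast?_flatten_replicate hanil hq)
  have hpowa : a ^ q = FreeGroup.mk ((List.replicate q aW).flatten) := by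
    conv_lhs => rw [← mk_toWord (x := a)]
    exact pow_mk q
  have hgq : g ^ q = FreeGroup.mk (U ++ (List.replicate q aW).flatten ++ invRev U) := by
    rw [hdec, conj_pow, hpowa, inv_mk, mul_mk, mul_mk]
  rw [hgq, toWord_mk_of_reduced hframe]

theorem frame_unique :
    ∀ (U : List (β × Bool)), ∀ (V P Q : List (β × Bool)),
    P ≠ [] → (∀ a ∈ P.getLast?, ∀ b ∈ P.head?, NC a b) →
    Q ≠ [] → (∀ a ∈ Q.getLast?, ∀ b ∈ Q.head?, NC a b) →
    U ++ P ++ invRev U = V ++ Q ++ invRev V → U = V ∧ P = Q := by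
  intro U
  induction U with
  | nil =>
    intro V P Q hP hPj hQ hQj heq
    cases V with
    | nil => simp_all [invRev]
    | cons v V' =>
      exfalso
      simp only [invRev_empty, List.append_nil, List.nil_append] at heq
      have hhead : P.head? = some v := by rw [heq]; simp
      have hlast : P.getLast? = some (v.1, !v.2) := by
        rw [heq, invRev_cons, ← List.append_assoc]
        exact List.getLast?_concat
      exact hPj _ hlast _ hhead (by simp)
  | cons u U' ihU =>
    intro V P Q hP hPj hQ hQj heq
    cases V with
    | nil =>
      exfalso
      simp only [invRev_empty, List.append_nil, List.nil_append] at heq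
      have hhead : Q.head? = some u := by rw [← heq]; simp
      have hlast : Q.getLast? = some (u.1, !u.2) := by
        rw [← heq, invRev_cons, ← List.append_assoc]
        exact List.getLast?_concat
      exact hQj _ hlast _ hhead (by simp)
    | cons v V' =>
      rw [invRev_cons, invRev_cons] at heq
      have heq' : u :: (U' ++ P ++ (invRev U' ++ [(u.1, !u.2)]))
          = v :: (V' ++ Q ++ (invRev V' ++ [(v.1, !v.2)])) := by
        simpa [List.append_assoc] using heq
      obtain ⟨huv, htail⟩ := List.cons_eq_cons.mp heq'
      subst huv
      have htail' : (U' ++ P ++ invRev U') ++ [(u.1, !u.2)]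
          = (V' ++ Q ++ invRev V') ++ [(u.1, !u.2)] := by
        simpa [List.append_assoc] using htail
      have hmid : U' ++ P ++ invRev U' = V' ++ Q ++ invRev V' :=
        (List.append_inj_left' htail' rfl)
      obtain ⟨h1, h2⟩ := ihU V' P Q hP hPj hQ hQj hmid
      exact ⟨by rw [h1], h2⟩

theorem freeGroup_pow_left_injective {q : ℕ} (hq : 0 < q) {h k : FreeGroup β}
    (hhk : h ^ q = k ^ q) : h = k := by
  by_cases h1 : h = 1
  · subst h1
    by_contra hk1
    obtain ⟨U, aW, hC, hanil, _, hpow⟩ := pow_description k (fun h => hk1 h.symm) q hq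
    rw [← hhk, one_pow] at hpow
    have : ([] : List (β × Bool)).length = (U ++ (List.replicate q aW).flatten ++ invRev U).length := by
      rw [← hpow, toWord_one]
    simp at this
    have haWpos : 0 < aW.length := List.length_pos_iff.mpr hanil
    have hqa : 0 < q * aW.length := Nat.mul_pos hq haWpos
    omega
  · by_cases k1 : k = 1
    · subst k1
      exfalso
      obtain ⟨U, aW, hC, hanil, _, hpow⟩ := pow_description h h1 q hq
      rw [hhk, one_pow] at hpow
      have : ([] : List (β × Bool)).length = (U ++ (List.replicate q aW).flatten ++ invRev U).length := by
        rw [← hpow, toWord_one]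
      simp at this
      have haWpos : 0 < aW.length := List.length_pos_iff.mpr hanil
      have hqa : 0 < q * aW.length := Nat.mul_pos hq haWpos
      omega
    · obtain ⟨U, aW, hCa, hanil, hWa, hpa⟩ := pow_description h h1 q hq
      obtain ⟨V, bW, hCb, hbnil, hWb, hpb⟩ := pow_description k k1 q hq
      have heq : U ++ (List.replicate q aW).flatten ++ invRev U
          = V ++ (List.replicate q bW).flatten ++ invRev V := by
        rw [← hpa, ← hpb, hhk]
      have hjun : ∀ (cW : List (β × Bool)), cW ≠ [] → Cyc cW →
          ∀ a ∈ ((List.replicate q cW).flatten).getLast?,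
          ∀ b ∈ ((List.replicate q cW).flatten).head?, NC a b := by
        intro cW hcnil hCc a ha b hb
        rw [getLast?_flatten_replicate hcnil hq] at ha
        rw [head?_flatten_replicate hcnil hq] at hb
        exact hCc.2.2 a ha b hb
      obtain ⟨hUV, hflat⟩ := frame_unique U V _ _
        (flatten_replicate_ne_nil hanil hq) (hjun aW hanil hCa)
        (flatten_replicate_ne_nil hbnil hq) (hjun bW hbnil hCb) heq
      -- lengths
      have hlen : aW.length = bW.length := by
        have h1 : ((List.replicate q aW).flatten).length = q * aW.length := by
          simp [List.length_flatten, List.map_replicate, List.sum_replicate, Nat.smul_one_eq_cast]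
        have h2 : ((List.replicate q bW).flatten).length = q * bW.length := by
          simp [List.length_flatten, List.map_replicate, List.sum_replicate, Nat.smul_one_eq_cast]
        have := congrArg List.length hflat
        rw [h1, h2] at this
        exact Nat.eq_of_mul_eq_mul_left hq this
      have haWbW : aW = bW := by
        obtain ⟨q', rfl⟩ := Nat.exists_eq_succ_of_ne_zero hq.ne'
        rw [List.replicate_succ, List.replicate_succ, List.flatten_cons, List.flatten_cons] at hflat
        exact (List.append_inj hflat hlen).1
      apply toWord_injective
      rw [hWa, hWb, hUV, haWbW]

end FreeGroupRoots



namespace FreeGroupRootsW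

variable (Y : Type*) (n : ℕ)

/-- shift automorphism of the product group `ZMod n → FreeGroup Y` -/
def shiftAut (c : ZMod n) : (ZMod n → FreeGroup Y) ≃* (ZMod n → FreeGroup Y) where
  toFun f := fun j => f (j + c)
  invFun f := fun j => f (j - c)
  left_inv f := funext fun j => by show f (j - c + c) = f j; rw [sub_add_cancel]
  right_inv f := funext fun j => by show f (j + c - c) = f j; rw [add_sub_cancel_right]
  map_mul' f g := rfl

def phiShift : Multiplicative (ZMod n) →* MulAut (ZMod n → FreeGroup Y) where
  toFun c := shiftAut Y n (Multiplicative.toAdd c)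
  map_one' := by
    refine MulEquiv.ext fun f => funext fun j => ?_
    simp [shiftAut]
  map_mul' c d := by
    refine MulEquiv.ext fun f => funext fun j => ?_
    simp [shiftAut, add_assoc]

abbrev Wr := SemidirectProduct (ZMod n → FreeGroup Y) (Multiplicative (ZMod n)) (phiShift Y n)

variable {Y} [DecidableEq Y] (x : Y)

open scoped Classical in
/-- images of the generators -/
noncomputable def gens : Y → Wr Y n := fun y =>
  if y = x then
    ⟨fun j => if j + 1 = 0 then FreeGroup.of x else 1, Multiplicative.ofAdd 1⟩
  else
    ⟨fun j => if j = 0 then FreeGroup.of y else 1, 1⟩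

noncomputable def Phi : FreeGroup Y →* Wr Y n := FreeGroup.lift (gens n x)

noncomputable def sigma : FreeGroup Y →* FreeGroup Y :=
  FreeGroup.lift (fun y => if y = x then FreeGroup.of x ^ n else FreeGroup.of y)

theorem sigma_range :
    (sigma n x).range
      = Subgroup.closure ((FreeGroup.of '' {y : Y | y ≠ x}) ∪ {FreeGroup.of x ^ n}) := by
  rw [sigma, FreeGroup.range_lift_eq_closure]
  congr 1
  ext z
  constructor
  · rintro ⟨y, rfl⟩
    by_cases hy : y = x
    · right
      simp [hy]
    · left
      exact ⟨y, hy, by simp [hy]⟩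
  · rintro (⟨y, hy, rfl⟩ | hz)
    · have hy' : y ≠ x := hy
      exact ⟨y, by simp [hy']⟩
    · rw [Set.mem_singleton_iff] at hz
      exact ⟨x, by simp [hz]⟩

variable [NeZero n]

open scoped Classical in
theorem phi_x_pow (k : ℕ) (hk : k ≤ n) :
    Phi n x (FreeGroup.of x ^ k) =
      ⟨fun j => if ∃ m : ℕ, m < k ∧ j + (m : ZMod n) + 1 = 0 then FreeGroup.of x else 1,
        Multiplicative.ofAdd (k : ZMod n)⟩ := by
  induction k with
  | zero =>
    rw [pow_zero, _root_.map_one]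
    ext : 1
    · funext j
      rw [SemidirectProduct.one_left]
      simp
    · rw [SemidirectProduct.one_right]
      simp
  | succ k ih =>
    have hk' : k ≤ n := Nat.le_of_succ_le hk
    rw [pow_succ', _root_.map_mul, ih hk']
    have hofx : Phi n x (FreeGroup.of x) =
        (⟨fun j => if j + 1 = 0 then FreeGroup.of x else 1, Multiplicative.ofAdd 1⟩ : Wr Y n) := by
      rw [Phi, FreeGroup.lift_apply_of, gens, if_pos rfl]
    rw [hofx]
    ext : 1
    · rw [SemidirectProduct.mul_left]
      funext j
      rw [Pi.mul_apply]
      have hshift : ∀ f : ZMod n → FreeGroup Y,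
          (phiShift Y n) (Multiplicative.ofAdd 1) f j = f (j + 1) := fun f => rfl
      rw [hshift]
      dsimp only
      by_cases hj : j + 1 = 0
      · rw [if_pos hj]
        have hnot : ¬ ∃ m : ℕ, m < k ∧ (j + 1) + (m : ZMod n) + 1 = 0 := by
          rintro ⟨m, hm, hme⟩
          rw [hj, zero_add] at hme
          have : ((m + 1 : ℕ) : ZMod n) = 0 := by push_cast; exact hme
          have hdvd : n ∣ m + 1 := (ZMod.natCast_eq_zero_iff _ _).mp this
          have := Nat.le_of_dvd (Nat.succ_pos m) hdvd
          omega
        rw [if_neg hnot]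
        have hpos : ∃ m : ℕ, m < k + 1 ∧ j + (m : ZMod n) + 1 = 0 := by
          exact ⟨0, Nat.succ_pos k, by simpa using hj⟩
        rw [if_pos hpos, mul_one]
      · rw [if_neg hj, one_mul]
        have hiff : (∃ m : ℕ, m < k ∧ (j + 1) + (m : ZMod n) + 1 = 0)
            ↔ (∃ m : ℕ, m < k + 1 ∧ j + (m : ZMod n) + 1 = 0) := by
          constructor
          · rintro ⟨m, hm, hme⟩
            refine ⟨m + 1, by omega, ?_⟩
            push_cast
            rw [show j + ((m : ZMod n) + 1) + 1 = j + 1 + (m : ZMod n) + 1 by ring]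
            exact hme
          · rintro ⟨m, hm, hme⟩
            cases m with
            | zero => exact absurd (by simpa using hme) hj
            | succ m' =>
              refine ⟨m', by omega, ?_⟩
              push_cast at hme
              rw [show j + 1 + (m' : ZMod n) + 1 = j + ((m' : ZMod n) + 1) + 1 by ring]
              exact hme
        rw [if_congr hiff rfl rfl]
    · rw [SemidirectProduct.mul_right]
      push_cast
      rw [← ofAdd_add]
      congr 1
      ring

open scoped Classical in
theorem phi_x_pow_n_right : (Phi n x (FreeGroup.of x ^ n)).right = 1 := by
  rw [phi_x_pow n x n le_rfl]
  simp [ZMod.natCast_self]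

open scoped Classical in
theorem phi_x_pow_n_left : (Phi n x (FreeGroup.of x ^ n)).left 0 = FreeGroup.of x := by
  rw [phi_x_pow n x n le_rfl]
  have hex : ∃ m : ℕ, m < n ∧ (0 : ZMod n) + (m : ZMod n) + 1 = 0 := by
    refine ⟨n - 1, by have := Nat.pos_of_ne_zero (NeZero.ne n); omega, ?_⟩
    rw [zero_add]
    have : ((n - 1 : ℕ) : ZMod n) + 1 = ((n - 1 + 1 : ℕ) : ZMod n) := by push_cast; ring
    rw [this, Nat.sub_add_cancel (Nat.pos_of_ne_zero (NeZero.ne n)), ZMod.natCast_self]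
  simp only []
  rw [if_pos hex]

/-- the subgroup of elements `a` with trivial monodromy and `σ (ρ a) = a` -/
noncomputable def goodSub : Subgroup (FreeGroup Y) where
  carrier := {a | (Phi n x a).right = 1 ∧ sigma n x ((Phi n x a).left 0) = a}
  one_mem' := by
    constructor
    · rw [_root_.map_one, SemidirectProduct.one_right]
    · rw [_root_.map_one, SemidirectProduct.one_left, Pi.one_apply, _root_.map_one]
  mul_mem' := by
    rintro a b ⟨ha1, ha2⟩ ⟨hb1, hb2⟩
    constructor
    · rw [_root_.map_mul, SemidirectProduct.mul_right, ha1, hb1, one_mul]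
    · rw [_root_.map_mul, SemidirectProduct.mul_left, ha1, _root_.map_one, MulAut.one_apply,
        Pi.mul_apply, _root_.map_mul, ha2, hb2]
  inv_mem' := by
    rintro a ⟨ha1, ha2⟩
    constructor
    · rw [_root_.map_inv, SemidirectProduct.inv_right, ha1, inv_one]
    · rw [_root_.map_inv, SemidirectProduct.inv_left, ha1, inv_one, _root_.map_one, MulAut.one_apply,
        Pi.inv_apply, _root_.map_inv, ha2]

theorem A_le_good :
    Subgroup.closure ((FreeGroup.of '' {y : Y | y ≠ x}) ∪ {FreeGroup.of x ^ n})
      ≤ goodSub n x := by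
  rw [Subgroup.closure_le]
  rintro z (⟨y, hy, rfl⟩ | hz)
  · have hPhi : Phi n x (FreeGroup.of y) =
        (⟨fun j => if j = 0 then FreeGroup.of y else 1, 1⟩ : Wr Y n) := by
      rw [Phi, FreeGroup.lift_apply_of, gens, if_neg hy]
    constructor
    · rw [hPhi]
    · rw [hPhi]
      have hy' : y ≠ x := hy
      dsimp only
      rw [if_pos rfl, sigma, FreeGroup.lift_apply_of, if_neg hy']
  · rw [Set.mem_singleton_iff] at hz
    subst hz
    constructor
    · exact phi_x_pow_n_right n x
    · rw [phi_x_pow_n_left n x, sigma, FreeGroup.lift_apply_of, if_pos rfl]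

theorem phi_pow_left (g : FreeGroup Y) (hr : (Phi n x g).right = 1) (k : ℕ) :
    (Phi n x (g ^ k)).right = 1 ∧
      (Phi n x (g ^ k)).left 0 = ((Phi n x g).left 0) ^ k := by
  induction k with
  | zero => simp [_root_.map_one, SemidirectProduct.one_right, SemidirectProduct.one_left]
  | succ k ih =>
    obtain ⟨ih1, ih2⟩ := ih
    rw [pow_succ', _root_.map_mul]
    constructor
    · rw [SemidirectProduct.mul_right, hr, ih1, one_mul]
    · rw [SemidirectProduct.mul_left, hr, _root_.map_one, MulAut.one_apply, Pi.mul_apply,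
        ih2, pow_succ']

end FreeGroupRootsW


/-- Let `Y` be a set with `x ∈ Y`, `p` a prime and `α` an integer with `0 < α < p`.
If `A ≤ F(Y)` is the subgroup generated by the generators other than `x` together with
`x ^ α`, then `g ^ p ∈ A` implies `g ∈ A`. -/
theorem free_group_power_subgroup_root_mem {Y : Type*} (x : Y)
    (p : ℕ) (hp : p.Prime) (α : ℤ) (hα : 0 < α) (hαp : α < (p : ℤ))
    (A : Subgroup (FreeGroup Y))
    (hA : A = Subgroup.closure
      ((FreeGroup.of '' {y : Y | y ≠ x}) ∪ {FreeGroup.of x ^ α}))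
    (g : FreeGroup Y) (hg : g ^ p ∈ A) : g ∈ A := by
  classical
  set n : ℕ := α.toNat with hn
  have hn' : (n : ℤ) = α := Int.toNat_of_nonneg hα.le
  have hn0 : 0 < n := by omega
  have hnp : n < p := by omega
  haveI : NeZero n := ⟨hn0.ne'⟩
  have hgen : FreeGroup.of x ^ α = FreeGroup.of x ^ n := by
    rw [← hn', zpow_natCast]
  rw [hA, hgen] at hg ⊢
  obtain ⟨hr, hs⟩ := FreeGroupRootsW.A_le_good n x hg
  -- the monodromy of `g` is trivial
  have hrp : (FreeGroupRootsW.Phi n x g).right ^ p = 1 := by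
    have h1 : (FreeGroupRootsW.Phi n x (g ^ p)).right
        = (FreeGroupRootsW.Phi n x g).right ^ p := by
      rw [_root_.map_pow]
      exact _root_.map_pow SemidirectProduct.rightHom _ p
    rw [← h1]
    exact hr
  have hc : (p : ZMod n) * Multiplicative.toAdd ((FreeGroupRootsW.Phi n x g).right) = 0 := by
    have h2 := congrArg Multiplicative.toAdd hrp
    rw [toAdd_pow] at h2
    rw [← nsmul_eq_mul]
    exact h2
  have hco : Nat.Coprime p n :=
    (Nat.Prime.coprime_iff_not_dvd hp).mpr
      (fun hdvd => absurd (Nat.le_of_dvd hn0 hdvd) (by omega))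
  have hu : IsUnit ((p : ℕ) : ZMod n) := (ZMod.isUnit_iff_coprime p n).mpr hco
  have hczero : Multiplicative.toAdd ((FreeGroupRootsW.Phi n x g).right) = 0 :=
    hu.mul_left_cancel (by rw [hc, mul_zero])
  have hright1 : (FreeGroupRootsW.Phi n x g).right = 1 := by
    have h3 : Multiplicative.toAdd ((FreeGroupRootsW.Phi n x g).right)
        = Multiplicative.toAdd (1 : Multiplicative (ZMod n)) := by rw [hczero]; rfl
    exact Multiplicative.toAdd.injective h3
  obtain ⟨-, hleft⟩ := FreeGroupRootsW.phi_pow_left n x g hright1 p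
  rw [hleft, _root_.map_pow] at hs
  have hroot : FreeGroupRootsW.sigma n x ((FreeGroupRootsW.Phi n x g).left 0) = g :=
    FreeGroupRoots.freeGroup_pow_left_injective hp.pos hs
  rw [← FreeGroupRootsW.sigma_range n x]
  exact ⟨_, hroot⟩
end

section
/- Let Y be a set with a distinguished element x ∈ Y, let α ≥ 1 be an integer, and let A be the subgroup of the free group F(Y) generated by the set (Y \ {x}) ∪ {x^{α}}. A reduced word v in the alphabet Y^{±1} represents an element of A if and only if every maximal subword of v consisting entirely of the letter x or entirely of the letter x^{-1} has length divisible by α. -/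
open List

namespace PowerBlocksAux

variable {Y : Type*} [DecidableEq Y]

/-- The "no cancellation" relation on letters: `a` followed by `b` does not cancel. -/
def NC : (Y × Bool) → (Y × Bool) → Prop := fun a b => ¬(a.1 = b.1 ∧ a.2 = !b.2)

lemma NC_refl (a : Y × Bool) : NC a a := by simp [NC]

/-- Expansion of a word: replace every occurrence of the letter `x` (with either sign)
by `n` copies of it. -/
def expand (x : Y) (n : ℕ) (l : List (Y × Bool)) : List (Y × Bool) :=
  l.flatMap fun a => if a.1 = x then List.replicate n a else [a]

@[simp] lemma expand_nil (x : Y) (n : ℕ) : expand x n ([] : List (Y × Bool)) = [] := rfl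

lemma expand_cons (x : Y) (n : ℕ) (a : Y × Bool) (l : List (Y × Bool)) :
    expand x n (a :: l) =
      (if a.1 = x then List.replicate n a else [a]) ++ expand x n l := by
  simp [expand]

lemma expand_append (x : Y) (n : ℕ) (l₁ l₂ : List (Y × Bool)) :
    expand x n (l₁ ++ l₂) = expand x n l₁ ++ expand x n l₂ := by
  simp [expand]

lemma expand_replicate (x : Y) (n q : ℕ) (t : Bool) :
    expand x n (List.replicate q (x, t)) = List.replicate (q * n) (x, t) := by
  induction q with
  | zero => simp
  | succ m ih =>
    rw [List.replicate_succ, expand_cons, ih, if_pos rfl, ← List.replicate_add]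
    congr 1
    ring

lemma reduce_cons_self {a : Y × Bool} {l : List (Y × Bool)}
    (h : FreeGroup.reduce (a :: l) = a :: l) :
    FreeGroup.reduce l = l ∧ ∀ b ∈ l.head?, NC a b := by
  have hlen : (FreeGroup.reduce l).length ≤ l.length :=
    (FreeGroup.Red.sublist (FreeGroup.reduce.red)).length_le
  rw [FreeGroup.reduce.cons] at h
  cases hr : FreeGroup.reduce l with
  | nil =>
    rw [hr] at h
    change [a] = a :: l at h
    have hl : l = [] := by injection h with _ h2; exact h2.symm
    subst hl
    exact ⟨rfl, by simp⟩
  | cons b t =>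
    rw [hr] at h
    change (if a.1 = b.1 ∧ a.2 = !b.2 then t else a :: b :: t) = a :: l at h
    by_cases hc : a.1 = b.1 ∧ a.2 = !b.2
    · rw [if_pos hc] at h
      exfalso
      have h1 := congrArg List.length h
      have h2 := congrArg List.length hr
      simp at h1 h2
      omega
    · rw [if_neg hc] at h
      have hl : l = b :: t := by
        injection h with _ h'
        exact h'.symm
      subst hl
      refine ⟨rfl, ?_⟩
      intro c hc'
      simp only [List.head?_cons, Option.mem_def, Option.some.injEq] at hc'
      subst hc'
      exact hc

lemma chain'_of_reduce : ∀ {l : List (Y × Bool)},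
    FreeGroup.reduce l = l → List.Chain' NC l
  | [], _ => List.isChain_nil
  | a :: l, h => by
    obtain ⟨h1, h2⟩ := reduce_cons_self h
    exact List.isChain_cons.mpr ⟨h2, chain'_of_reduce h1⟩

lemma reduce_of_chain' : ∀ {l : List (Y × Bool)},
    List.Chain' NC l → FreeGroup.reduce l = l
  | [], _ => rfl
  | a :: l, h => by
    obtain ⟨h2, h1⟩ := List.isChain_cons.mp h
    have ih := reduce_of_chain' h1
    rw [FreeGroup.reduce.cons, ih]
    cases l with
    | nil => rfl
    | cons b t =>
      have hnc : ¬(a.1 = b.1 ∧ a.2 = !b.2) := h2 b rfl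
      show (if a.1 = b.1 ∧ a.2 = !b.2 then t else a :: b :: t) = a :: b :: t
      rw [if_neg hnc]

lemma chain'_replicate_self (n : ℕ) (a : Y × Bool) :
    List.Chain' NC (List.replicate n a) := by
  induction n with
  | zero => exact List.isChain_nil
  | succ m ih =>
    rw [List.replicate_succ]
    refine List.isChain_cons.mpr ⟨?_, ih⟩
    intro b hb
    rw [List.head?_replicate] at hb
    split at hb
    · simp at hb
    · simp only [Option.mem_def, Option.some.injEq] at hb
      subst hb
      exact NC_refl a

lemma chunk_ne_nil (x : Y) {n : ℕ} (hn : 0 < n) (a : Y × Bool) :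
    (if a.1 = x then List.replicate n a else [a]) ≠ [] := by
  split
  · intro hnil
    have := congrArg List.length hnil
    simp at this
    omega
  · simp

lemma head?_chunk (x : Y) {n : ℕ} (hn : 0 < n) (a : Y × Bool) :
    (if a.1 = x then List.replicate n a else [a]).head? = some a := by
  split
  · rw [List.head?_replicate, if_neg (by omega)]
  · rfl

lemma getLast?_chunk (x : Y) {n : ℕ} (hn : 0 < n) (a : Y × Bool) :
    (if a.1 = x then List.replicate n a else [a]).getLast? = some a := by
  split
  · rw [List.getLast?_replicate, if_neg (by omega)]
  · rfl

lemma mem_chunk (x : Y) {n : ℕ} (a b : Y × Bool)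
    (hb : b ∈ (if a.1 = x then List.replicate n a else [a])) : b = a := by
  split at hb
  · exact List.eq_of_mem_replicate hb
  · simpa using hb

lemma head?_expand (x : Y) {n : ℕ} (hn : 0 < n) (b : Y × Bool)
    {l : List (Y × Bool)} (hb : (expand x n l).head? = some b) :
    l.head? = some b := by
  cases l with
  | nil => simp at hb
  | cons a t =>
    rw [expand_cons, List.head?_append_of_ne_nil _ (chunk_ne_nil x hn a),
      head?_chunk x hn a] at hb
    rw [List.head?_cons]
    exact hb

lemma chain'_expand (x : Y) {n : ℕ} (hn : 0 < n) :
    ∀ {l : List (Y × Bool)}, List.Chain' NC l → List.Chain' NC (expand x n l)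
  | [], _ => by rw [expand_nil]; exact List.isChain_nil
  | a :: l, h => by
    obtain ⟨h2, h1⟩ := List.isChain_cons.mp h
    rw [expand_cons]
    show List.IsChain NC _
    rw [List.isChain_append]
    refine ⟨?_, chain'_expand x hn h1, ?_⟩
    · split
      · exact chain'_replicate_self n a
      · simp
    · intro p hp q hq
      rw [Option.mem_def, getLast?_chunk x hn a, Option.some.injEq] at hp
      subst hp
      rw [Option.mem_def] at hq
      have hlh := head?_expand x hn q hq
      cases l with
      | nil => simp at hlh
      | cons b t =>
        rw [List.head?_cons, Option.some.injEq] at hlh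
        subst hlh
        exact h2 b rfl

/-- Key combinatorial lemma: any maximal `(x,s)`-block of an expanded word has length
divisible by `n`. -/
lemma expand_blocks (x : Y) {n : ℕ} (hn : 0 < n) (s : Bool) (w : List (Y × Bool)) :
    ∀ (v₁ v₃ : List (Y × Bool)) (k : ℕ),
      expand x n w = v₁ ++ List.replicate k (x, s) ++ v₃ →
      v₁.getLast? ≠ some (x, s) → v₃.head? ≠ some (x, s) → n ∣ k := by
  induction w with
  | nil =>
    intro v₁ v₃ k h _ _
    have := congrArg List.length h
    simp at this
    have hk : k = 0 := by omega
    simp [hk]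
  | cons a w ih =>
    intro v₁ v₃ k h h1 h3
    rw [expand_cons, List.append_assoc] at h
    rcases List.append_eq_append_iff.mp h with ⟨u, hv₁, hw⟩ | ⟨u, hcu, hu⟩
    · -- v₁ = chunk ++ u, expand w = u ++ (rep ++ v₃)
      refine ih u v₃ k (by rw [hw, List.append_assoc]) ?_ h3
      cases u with
      | nil => simp
      | cons p q =>
        rw [hv₁, List.getLast?_append_of_ne_nil _ (by simp)] at h1
        exact h1
    · -- chunk = v₁ ++ u, rep ++ v₃ = u ++ expand w
      cases u with
      | nil =>
        rw [List.append_nil] at hcu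
        rw [List.nil_append] at hu
        exact ih [] v₃ k (by rw [← hu, List.nil_append]) (by simp) h3
      | cons p u' =>
        have hp : p = a := mem_chunk x a p (by rw [hcu]; simp)
        subst hp
        by_cases hk : k = 0
        · simp [hk]
        · -- k > 0 : head of rep ++ v₃ is (x,s), equals p = a
          have hhead : ((List.replicate k (x, s) ++ v₃).head?) = some (x, s) := by
            rw [List.head?_append_of_ne_nil _ (by simp [hk]), List.head?_replicate,
              if_neg hk]
          rw [hu, List.cons_append, List.head?_cons] at hhead
          have ha : p = (x, s) := Option.some.inj hhead
          subst ha
          -- so chunk = replicate n (x,s)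
          have hx : ((x, s) : Y × Bool).1 = x := rfl
          rw [if_pos hx] at hcu
          -- v₁ must be empty
          have hv₁nil : v₁ = [] := by
            by_contra hne
            apply h1
            have hmem : ∀ b ∈ v₁, b = ((x, s) : Y × Bool) := by
              intro b hb
              exact List.eq_of_mem_replicate (by rw [hcu]; exact List.mem_append_left _ hb)
            rw [List.getLast?_eq_getLast hne, hmem _ (List.getLast_mem hne)]
          subst hv₁nil
          rw [List.nil_append] at hcu
          rw [← hcu] at hu
          -- hu : replicate k (x,s) ++ v₃ = replicate n (x,s) ++ expand w
          rcases List.append_eq_append_iff.mp hu with ⟨b, hb1, hb2⟩ | ⟨c, hc1, hc2⟩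
          · -- replicate n = replicate k ++ b, v₃ = b ++ expand w
            have hlen : n = k + b.length := by
              have := congrArg List.length hb1; simpa using this
            cases b with
            | nil =>
              have : n = k := by simpa using hlen
              exact this ▸ dvd_refl n
            | cons q b' =>
              exfalso
              apply h3
              have hq : q = ((x, s) : Y × Bool) :=
                List.eq_of_mem_replicate (by rw [hb1]; simp)
              rw [hb2, List.head?_append_of_ne_nil _ (by simp), List.head?_cons, hq]
          · -- replicate k = replicate n ++ c, expand w = c ++ v₃
            have hlen : k = n + c.length := by
              have := congrArg List.length hc1; simpa using this
            have hcrep : c = List.replicate c.length ((x, s) : Y × Bool) := by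
              rw [List.eq_replicate_iff]
              refine ⟨rfl, ?_⟩
              intro b hb
              exact List.eq_of_mem_replicate
                (by rw [hc1]; exact List.mem_append_right _ hb)
            have hdvd : n ∣ c.length := by
              refine ih [] v₃ c.length ?_ (by simp) h3
              rw [List.nil_append, ← hcrep]
              exact hc2
            rw [hlen]
            exact dvd_add (dvd_refl n) hdvd

lemma head_dropWhile {β : Type*} (p : β → Bool) :
    ∀ (l : List β) (b : β), (List.dropWhile p l).head? = some b → p b = false := by
  intro l
  induction l with
  | nil => intro b hb; simp at hb
  | cons a t ih =>
    intro b hb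
    rw [List.dropWhile_cons] at hb
    split at hb
    · exact ih b hb
    · rw [List.head?_cons, Option.some.injEq] at hb
      subst hb
      simpa using ‹¬p a = true›

/-- Converse construction: a reduced word all of whose maximal `x`-blocks have length
divisible by `n` is the expansion of some word. -/
lemma exists_expand (x : Y) {n : ℕ} (hn : 0 < n) :
    ∀ (N : ℕ) (v : List (Y × Bool)), v.length ≤ N → List.Chain' NC v →
      (∀ (v₁ v₃ : List (Y × Bool)) (s : Bool) (k : ℕ),
        v = v₁ ++ List.replicate k (x, s) ++ v₃ →
        v₁.getLast? ≠ some (x, s) → v₃.head? ≠ some (x, s) → n ∣ k) →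
      ∃ w, expand x n w = v := by
  intro N
  induction N with
  | zero =>
    intro v hv _ _
    have hnil : v = [] := List.eq_nil_of_length_eq_zero (by omega)
    exact ⟨[], by simp [hnil]⟩
  | succ N ihN =>
    intro v hv hch hblk
    cases hcv : v with
    | nil => exact ⟨[], by simp⟩
    | cons a v' =>
      subst hcv
      obtain ⟨y, t⟩ := a
      by_cases hyx : y = x
      · subst hyx
        -- now the distinguished letter is called `y`
        set p : (Y × Bool) → Bool := fun b => decide (b = (y, t)) with hp
        set v₃ := List.dropWhile p ((y, t) :: v') with hv₃
        set m := (List.takeWhile p ((y, t) :: v')).length with hm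
        have htake : List.takeWhile p ((y, t) :: v')
            = List.replicate m ((y, t) : Y × Bool) := by
          rw [List.eq_replicate_iff]
          refine ⟨rfl, ?_⟩
          intro b hb
          have hptrue := List.mem_takeWhile_imp hb
          rw [hp] at hptrue
          exact of_decide_eq_true hptrue
        have hsplit : (y, t) :: v' = List.replicate m ((y, t) : Y × Bool) ++ v₃ := by
          rw [← htake, hv₃, List.takeWhile_append_dropWhile]
        have hm1 : 1 ≤ m := by
          rw [hm, List.takeWhile_cons_of_pos (by simp [hp])]
          simp
        have hv₃t : v₃.head? ≠ some (y, t) := by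
          intro hcon
          have := head_dropWhile p _ _ hcon
          simp [hp] at this
        have hch2 : List.Chain' NC (List.replicate m ((y, t) : Y × Bool) ++ v₃) := by
          rw [← hsplit]; exact hch
        have hv₃x : ∀ s' : Bool, v₃.head? ≠ some (y, s') := by
          intro s' hcon
          by_cases hst : s' = t
          · exact hv₃t (hst ▸ hcon)
          · have hs' : s' = !t := by
              cases s' <;> cases t
              · exact absurd rfl hst
              · rfl
              · rfl
              · exact absurd rfl hst
            have hrel := (List.isChain_append.mp hch2).2.2 (y, t) ?_ (y, s') ?_
            · exact hrel ⟨rfl, by simp [hs']⟩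
            · rw [Option.mem_def, List.getLast?_replicate, if_neg (by omega)]
            · rw [Option.mem_def, hcon]
        have hdvd : n ∣ m :=
          hblk [] v₃ t m (by rw [List.nil_append]; exact hsplit) (by simp) hv₃t
        have hlen : v₃.length ≤ N := by
          have hL := congrArg List.length hsplit
          rw [List.length_cons, List.length_append, List.length_replicate] at hL
          have hv' := hv
          rw [List.length_cons] at hv'
          omega
        have hch₃ : List.Chain' NC v₃ := hch2.right_of_append
        have hblk₃ : ∀ (u₁ u₃ : List (Y × Bool)) (s : Bool) (k : ℕ),
            v₃ = u₁ ++ List.replicate k (y, s) ++ u₃ →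
            u₁.getLast? ≠ some (y, s) → u₃.head? ≠ some (y, s) → n ∣ k := by
          intro u₁ u₃ s k hsp hu1 hu3
          cases u₁ with
          | nil =>
            by_cases hk : k = 0
            · simp [hk]
            · exfalso
              apply hv₃x s
              rw [hsp, List.nil_append,
                List.head?_append_of_ne_nil _ (by simp [hk]), List.head?_replicate,
                if_neg hk]
          | cons b u' =>
            refine hblk (List.replicate m ((y, t) : Y × Bool) ++ (b :: u')) u₃ s k ?_ ?_ hu3
            · rw [hsplit, hsp]
              simp [List.append_assoc]
            · rw [List.getLast?_append_of_ne_nil _ (by simp)]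
              exact hu1
        obtain ⟨w₃, hw₃⟩ := ihN v₃ hlen hch₃ hblk₃
        refine ⟨List.replicate (m / n) ((y, t) : Y × Bool) ++ w₃, ?_⟩
        rw [expand_append, hw₃, expand_replicate, Nat.div_mul_cancel hdvd]
        exact hsplit.symm
      · -- first letter is not x : peel it off
        have hch' : List.Chain' NC v' := (List.isChain_cons.mp hch).2
        have hblk' : ∀ (u₁ u₃ : List (Y × Bool)) (s : Bool) (k : ℕ),
            v' = u₁ ++ List.replicate k (x, s) ++ u₃ →
            u₁.getLast? ≠ some (x, s) → u₃.head? ≠ some (x, s) → n ∣ k := by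
          intro u₁ u₃ s k hsp hu1 hu3
          refine hblk ((y, t) :: u₁) u₃ s k (by rw [hsp]; simp) ?_ hu3
          cases u₁ with
          | nil => simp [hyx]
          | cons b u' => rw [List.getLast?_cons_cons]; exact hu1
        obtain ⟨w', hw'⟩ := ihN v' (by simpa using hv) hch' hblk'
        refine ⟨(y, t) :: w', ?_⟩
        rw [expand_cons, if_neg hyx, hw']
        rfl

lemma of_pow_eq_mk (x : Y) (n : ℕ) :
    (FreeGroup.of x : FreeGroup Y) ^ n = FreeGroup.mk (List.replicate n (x, true)) := by
  induction n with
  | zero => rw [pow_zero, FreeGroup.one_eq_mk]; rfl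
  | succ m ih =>
    rw [pow_succ, ih, FreeGroup.of, FreeGroup.mul_mk, ← List.replicate_succ']

lemma of_pow_inv_eq_mk (x : Y) (n : ℕ) :
    ((FreeGroup.of x : FreeGroup Y) ^ n)⁻¹ = FreeGroup.mk (List.replicate n (x, false)) := by
  rw [of_pow_eq_mk, FreeGroup.inv_mk]
  congr 1
  simp [FreeGroup.invRev]

lemma mk_single_false (y : Y) :
    FreeGroup.mk [(y, false)] = (FreeGroup.of y)⁻¹ := by
  rw [FreeGroup.of, FreeGroup.inv_mk]
  rfl

lemma lift_mk_expand (x : Y) (n : ℕ) :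
    ∀ l : List (Y × Bool),
      FreeGroup.lift (fun y => if y = x then FreeGroup.of x ^ n else FreeGroup.of y)
          (FreeGroup.mk l)
        = FreeGroup.mk (expand x n l)
  | [] => by rw [← FreeGroup.one_eq_mk, map_one]; rfl
  | (y, b) :: l => by
    have ih := lift_mk_expand x n l
    have hsplit : FreeGroup.mk ((y, b) :: l) = FreeGroup.mk [(y, b)] * FreeGroup.mk l := by
      rw [FreeGroup.mul_mk]; rfl
    rw [hsplit, map_mul, ih, expand_cons, ← FreeGroup.mul_mk]
    congr 1
    cases b
    · rw [mk_single_false, map_inv, FreeGroup.lift_apply_of]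
      by_cases hy : y = x
      · subst hy
        rw [if_pos rfl, of_pow_inv_eq_mk]
        rw [if_pos rfl]
      · rw [if_neg hy, ← mk_single_false, if_neg hy]
    · rw [show FreeGroup.mk [(y, true)] = FreeGroup.of y from rfl, FreeGroup.lift_apply_of]
      by_cases hy : y = x
      · subst hy
        rw [if_pos rfl, of_pow_eq_mk, if_pos rfl]
      · rw [if_neg hy, if_neg hy]
        rfl

end PowerBlocksAux

open PowerBlocksAux in
/-- Let `Y` be a set with `x ∈ Y`, let `α ≥ 1` be an integer and let `A ≤ F(Y)` be the
subgroup generated by the generators other than `x` together with `x ^ α`.  A reduced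
word `v` in the alphabet `Y^{±1}` represents an element of `A` if and only if every
maximal subword of `v` consisting entirely of the letter `x` or entirely of the letter
`x⁻¹` has length divisible by `α`.  A maximal such subword is formalized as a block
`List.replicate k (x, s)` occurring in `v` that is not preceded nor followed by the
letter `(x, s)`. -/
theorem mem_power_subgroup_iff_blocks {Y : Type*} [DecidableEq Y] (x : Y)
    (α : ℤ) (hα : 1 ≤ α)
    (A : Subgroup (FreeGroup Y))
    (hA : A = Subgroup.closure
      ((FreeGroup.of '' {y : Y | y ≠ x}) ∪ {FreeGroup.of x ^ α}))
    (v : List (Y × Bool)) (hv : FreeGroup.reduce v = v) :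
    FreeGroup.mk v ∈ A ↔
      ∀ (v₁ v₂ v₃ : List (Y × Bool)) (s : Bool) (k : ℕ),
        v = v₁ ++ v₂ ++ v₃ → v₂ = List.replicate k (x, s) →
        v₁.getLast? ≠ some (x, s) → v₃.head? ≠ some (x, s) →
        α ∣ (k : ℤ) := by
  set n := α.toNat with hn
  have hαn : α = (n : ℤ) := by rw [hn, Int.toNat_of_nonneg (by omega)]
  have hn0 : 0 < n := by omega
  set f : Y → FreeGroup Y := fun y => if y = x then FreeGroup.of x ^ n else FreeGroup.of y
    with hf
  have hpow : (FreeGroup.of x : FreeGroup Y) ^ α = FreeGroup.of x ^ n := by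
    rw [hαn, zpow_natCast]
  have hrange : A = (FreeGroup.lift f).range := by
    rw [hA, FreeGroup.range_lift_eq_closure]
    congr 1
    ext g
    constructor
    · rintro (⟨y, hy, rfl⟩ | hg)
      · exact ⟨y, by rw [hf]; simp only [if_neg hy]⟩
      · refine ⟨x, ?_⟩
        have hg' : g = FreeGroup.of x ^ α := hg
        rw [hg', hpow, hf]
        simp
    · rintro ⟨y, rfl⟩
      by_cases hy : y = x
      · subst hy
        right
        show f y = FreeGroup.of y ^ α
        rw [hf, hpow]
        simp
      · left
        exact ⟨y, hy, by rw [hf]; simp only [if_neg hy]⟩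
  rw [hrange, MonoidHom.mem_range]
  constructor
  · rintro ⟨g, hg⟩
    have hw : FreeGroup.reduce g.toWord = g.toWord := FreeGroup.reduce_toWord g
    have hg' : FreeGroup.mk (expand x n g.toWord) = FreeGroup.mk v := by
      rw [← lift_mk_expand x n g.toWord, FreeGroup.mk_toWord, hg]
    have hred : FreeGroup.reduce (expand x n g.toWord) = expand x n g.toWord :=
      reduce_of_chain' (chain'_expand x hn0 (chain'_of_reduce hw))
    have hveq : expand x n g.toWord = v := by
      have := congrArg FreeGroup.toWord hg'
      rw [FreeGroup.toWord_mk, FreeGroup.toWord_mk, hred, hv] at this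
      exact this
    intro v₁ v₂ v₃ s k hsp hrep h1 h3
    subst hrep
    have : n ∣ k := expand_blocks x hn0 s g.toWord v₁ v₃ k (by rw [hveq, hsp]) h1 h3
    rw [hαn]
    exact Int.natCast_dvd_natCast.mpr this
  · intro hblk
    obtain ⟨w, hw⟩ := exists_expand x hn0 v.length v le_rfl (chain'_of_reduce hv)
      (fun v₁ v₃ s k hsp h1 h3 => by
        have := hblk v₁ (List.replicate k (x, s)) v₃ s k hsp rfl h1 h3
        rw [hαn] at this
        exact Int.natCast_dvd_natCast.mp this)
    exact ⟨FreeGroup.mk w, by rw [lift_mk_expand x n w, hw]⟩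
end
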